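/- Let ν be a finite Borel measure on ℝ³ with total mass M := ν(ℝ³), let s ∈ ℝ³, and let Θ > 0, ε > 0. Suppose that ν(closedBall(s, r)) ≤ Θ r for every r > 0. Then ∫_{ℝ³} (ε² + |s − t|²)^{−1/2} dν(t) ≤ Θ log(1 + 2M/(ε Θ)). -/

import Mathlib

set_option maxHeartbeats 800000
set_option maxRecDepth 8000


open MeasureTheory

open Set in
/-- FTC computation: the antiderivative of `√(1-ε²λ²)/λ`. -/
lemma aux_ftc (ε a b : ℝ) (hε : 0 < ε) (ha : 0 < a) (hab : a ≤ b) (hb : b ≤ ε⁻¹) :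
    ∫ x in a..b, Real.sqrt (1 - ε^2*x^2) / x =
      (Real.sqrt (1 - ε^2*b^2) - Real.log (1 + Real.sqrt (1 - ε^2*b^2)) + Real.log b)
      - (Real.sqrt (1 - ε^2*a^2) - Real.log (1 + Real.sqrt (1 - ε^2*a^2)) + Real.log a) := by
  set F : ℝ → ℝ := fun x =>
    Real.sqrt (1 - ε^2*x^2) - Real.log (1 + Real.sqrt (1 - ε^2*x^2)) + Real.log x with hF
  have hcont : ContinuousOn F (Icc a b) := by
    have c1 : Continuous fun x : ℝ => Real.sqrt (1 - ε^2*x^2) :=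
      Real.continuous_sqrt.comp (by continuity)
    refine ((c1.continuousOn.sub (ContinuousOn.log ?_ ?_)).add (ContinuousOn.log ?_ ?_))
    · exact (continuous_const.add c1).continuousOn
    · intro x _; positivity
    · exact continuousOn_id
    · intro x hx; exact ne_of_gt (lt_of_lt_of_le ha hx.1)
  have hderiv : ∀ x ∈ Ioo a b, HasDerivWithinAt F (Real.sqrt (1 - ε^2*x^2) / x) (Ioi x) x := by
    intro x hx
    have hx0 : 0 < x := lt_trans ha hx.1
    have hxb : x < ε⁻¹ := lt_of_lt_of_le hx.2 hb
    have hq : 0 < 1 - ε^2*x^2 := by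
      have : ε * x < 1 := by
        have := (mul_lt_mul_iff_right₀ hε).mpr hxb
        rwa [mul_inv_cancel₀ (ne_of_gt hε)] at this
      nlinarith [mul_pos hε hx0, mul_pos (mul_pos hε hx0) (sub_pos.mpr this)]
    set w := Real.sqrt (1 - ε^2*x^2) with hw
    have hw0 : 0 < w := Real.sqrt_pos.mpr hq
    have hw2 : w^2 = 1 - ε^2*x^2 := Real.sq_sqrt hq.le
    have h1 : HasDerivAt (fun y : ℝ => 1 - ε^2*y^2) (-(ε^2*(2*x))) x := by
      simpa using ((hasDerivAt_pow 2 x).const_mul (ε^2)).const_sub 1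
    have h2 : HasDerivAt (fun y : ℝ => Real.sqrt (1 - ε^2*y^2))
        (-(ε^2*(2*x)) / (2 * w)) x := h1.sqrt (ne_of_gt hq)
    have h3 : HasDerivAt (fun y : ℝ => Real.log (1 + Real.sqrt (1 - ε^2*y^2)))
        ((-(ε^2*(2*x)) / (2 * w)) / (1 + w)) x := by
      exact (h2.const_add 1).log (by positivity)
    have h4 : HasDerivAt Real.log x⁻¹ x := Real.hasDerivAt_log (ne_of_gt hx0)
    have h5 : HasDerivAt F
        ((-(ε^2*(2*x)) / (2 * w)) - (-(ε^2*(2*x)) / (2 * w)) / (1 + w) + x⁻¹) x :=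
      (h2.sub h3).add h4
    have heq : (-(ε^2*(2*x)) / (2 * w)) - (-(ε^2*(2*x)) / (2 * w)) / (1 + w) + x⁻¹
        = w / x := by
      have h1w : (0:ℝ) < 1 + w := by positivity
      field_simp
      linear_combination (-w) * hw2
    rw [← heq]
    exact h5.hasDerivWithinAt
  have hint : IntervalIntegrable (fun x => Real.sqrt (1 - ε^2*x^2) / x) volume a b := by
    apply ContinuousOn.intervalIntegrable
    rw [uIcc_of_le hab]
    apply ContinuousOn.div
    · exact (Real.continuous_sqrt.comp (by continuity)).continuousOn
    · exact continuousOn_id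
    · intro x hx; exact ne_of_gt (lt_of_lt_of_le ha hx.1)
  exact intervalIntegral.integral_eq_sub_of_hasDeriv_right_of_le hab hcont hderiv hint

/-- Density-constrained potential estimate: if a finite measure `ν` on `ℝ³` satisfies
`ν(B̄(s,r)) ≤ Θ r` for all `r > 0`, then
`∫ (ε² + |s−t|²)^{-1/2} dν(t) ≤ Θ log(1 + 2M/(εΘ))` with `M = ν(ℝ³)`. -/
theorem stmt6 (ν : Measure (EuclideanSpace ℝ (Fin 3))) [IsFiniteMeasure ν]
    (s : EuclideanSpace ℝ (Fin 3)) (Θ ε : ℝ) (hΘ : 0 < Θ) (hε : 0 < ε)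
    (hdens : ∀ r : ℝ, 0 < r → ν (Metric.closedBall s r) ≤ ENNReal.ofReal (Θ * r)) :
    (∫ t, (Real.sqrt (ε ^ 2 + ‖s - t‖ ^ 2))⁻¹ ∂ν) ≤
      Θ * Real.log (1 + 2 * (ν Set.univ).toReal / (ε * Θ)) := by
  set M := (ν Set.univ).toReal with hMdef
  have hM : 0 ≤ M := ENNReal.toReal_nonneg
  set R := M / Θ with hRdef
  have hR : 0 ≤ R := div_nonneg hM hΘ.le
  have hMR : M = Θ * R := by rw [hRdef]; field_simp
  set B := Real.sqrt (ε^2 + R^2) with hBdef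
  have hB2 : B^2 = ε^2 + R^2 := Real.sq_sqrt (by positivity)
  have hεB : ε ≤ B := by
    nlinarith [hB2, Real.sqrt_nonneg (ε^2 + R^2), sq_nonneg R]
  have hB0 : 0 < B := lt_of_lt_of_le hε hεB
  have hBεR : B ≤ ε + R := by nlinarith [hB2, hB0.le]
  set l1 := B⁻¹ with hl1def
  have hl10 : 0 < l1 := inv_pos.mpr hB0
  have hl1ε : l1 ≤ ε⁻¹ := by
    rw [hl1def]
    exact inv_anti₀ hε hεB
  set f : EuclideanSpace ℝ (Fin 3) → ℝ := fun t => (Real.sqrt (ε ^ 2 + ‖s - t‖ ^ 2))⁻¹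
    with hfdef
  have hfnn : ∀ t, 0 ≤ f t := fun t => inv_nonneg.mpr (Real.sqrt_nonneg _)
  have hsqrtpos : ∀ t, ε ≤ Real.sqrt (ε ^ 2 + ‖s - t‖ ^ 2) := by
    intro t
    have h1 : 0 ≤ ε ^ 2 + ‖s - t‖ ^ 2 := by positivity
    nlinarith [Real.sq_sqrt h1, Real.sqrt_nonneg (ε ^ 2 + ‖s - t‖ ^ 2), sq_nonneg ‖s - t‖]
  have hfle : ∀ t, f t ≤ ε⁻¹ := fun t => inv_anti₀ hε (hsqrtpos t)
  have hfcont : Continuous f := by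
    apply Continuous.inv₀
    · exact Real.continuous_sqrt.comp
        (continuous_const.add (((continuous_const.sub continuous_id).norm).pow 2))
    · intro t; exact ne_of_gt (lt_of_lt_of_le hε (hsqrtpos t))
  have hν_univ : ν Set.univ = ENNReal.ofReal M :=
    (ENNReal.ofReal_toReal (measure_ne_top ν _)).symm
  set φ : ℝ → ℝ := fun lam => Θ * (Real.sqrt (1 - ε^2*lam^2) / lam) with hφdef
  -- pointwise measure bound on the middle range
  have hmeas_bound : ∀ lam ∈ Set.Ioc l1 ε⁻¹,
      ν {t | lam < f t} ≤ ENNReal.ofReal (φ lam) := by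
    intro lam hlam
    rcases eq_or_lt_of_le hlam.2 with heq | hlt
    · have hempty : {t | lam < f t} = ∅ := by
        ext t
        simp only [Set.mem_setOf_eq, Set.mem_empty_iff_false, iff_false, not_lt]
        exact le_trans (hfle t) (le_of_eq heq.symm)
      rw [hempty, measure_empty]
      exact zero_le
    · have hlam0 : 0 < lam := lt_trans hl10 hlam.1
      have hεlam : ε * lam < 1 := by
        have := (mul_lt_mul_iff_right₀ hε).mpr hlt
        rwa [mul_inv_cancel₀ (ne_of_gt hε)] at this
      have hq : 0 < 1 - ε^2*lam^2 := by
        nlinarith [mul_pos hε hlam0, mul_pos (mul_pos hε hlam0) (sub_pos.mpr hεlam)]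
      set r := Real.sqrt (1 - ε^2*lam^2) / lam with hrdef
      have hrpos : 0 < r := div_pos (Real.sqrt_pos.mpr hq) hlam0
      have hsub : {t | lam < f t} ⊆ Metric.closedBall s r := by
        intro t ht
        simp only [Set.mem_setOf_eq] at ht
        have hs0 : 0 < Real.sqrt (ε ^ 2 + ‖s - t‖ ^ 2) := lt_of_lt_of_le hε (hsqrtpos t)
        have h1 : lam * Real.sqrt (ε ^ 2 + ‖s - t‖ ^ 2) < 1 := by
          have := mul_lt_mul_of_pos_right ht hs0
          rwa [inv_mul_cancel₀ (ne_of_gt hs0)] at this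
        have h2 : Real.sqrt (ε ^ 2 + ‖s - t‖ ^ 2) < lam⁻¹ := by
          rw [inv_eq_one_div, lt_div_iff₀ hlam0]
          nlinarith [h1]
        have hnn : (0:ℝ) ≤ ε ^ 2 + ‖s - t‖ ^ 2 := by positivity
        have h3 : ε ^ 2 + ‖s - t‖ ^ 2 < lam⁻¹^2 := by
          nlinarith [Real.sq_sqrt hnn, Real.sqrt_nonneg (ε ^ 2 + ‖s - t‖ ^ 2), h2, hs0]
        have hr2 : r^2 = lam⁻¹^2 - ε^2 := by
          rw [hrdef, div_pow, Real.sq_sqrt hq.le]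
          field_simp
        have h4 : ‖s - t‖^2 ≤ r^2 := by linarith [h3, hr2]
        have h5 : ‖s - t‖ ≤ r := by
          nlinarith [h4, hrpos, norm_nonneg (s - t)]
        rw [Metric.mem_closedBall, dist_comm, dist_eq_norm]
        exact h5
      calc ν {t | lam < f t} ≤ ν (Metric.closedBall s r) := measure_mono hsub
        _ ≤ ENNReal.ofReal (Θ * r) := hdens r hrpos
  -- piece 1
  have hp1 : ∫⁻ lam in Set.Ioc (0:ℝ) l1, ν {t | lam < f t} ≤ ENNReal.ofReal (M * l1) := by
    calc ∫⁻ lam in Set.Ioc (0:ℝ) l1, ν {t | lam < f t}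
        ≤ ∫⁻ _ in Set.Ioc (0:ℝ) l1, ν Set.univ :=
          setLIntegral_mono measurable_const (fun lam _ => measure_mono (Set.subset_univ _))
      _ = ν Set.univ * volume (Set.Ioc (0:ℝ) l1) := setLIntegral_const _ _
      _ = ENNReal.ofReal M * ENNReal.ofReal l1 := by
          rw [hν_univ, Real.volume_Ioc]; norm_num
      _ = ENNReal.ofReal (M * l1) := (ENNReal.ofReal_mul hM).symm
  -- piece 3
  have hp3 : ∫⁻ lam in Set.Ioi (ε⁻¹), ν {t | lam < f t} = 0 := by
    refine le_antisymm ?_ zero_le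
    have hz : ∀ lam ∈ Set.Ioi (ε⁻¹), ν {t | lam < f t} ≤ 0 := by
      intro lam hlam
      have hempty : {t | lam < f t} = ∅ := by
        ext t
        simp only [Set.mem_setOf_eq, Set.mem_empty_iff_false, iff_false, not_lt]
        exact le_trans (hfle t) (le_of_lt hlam)
      rw [hempty, measure_empty]
    calc ∫⁻ lam in Set.Ioi (ε⁻¹), ν {t | lam < f t}
        ≤ ∫⁻ _ in Set.Ioi (ε⁻¹), (0:ENNReal) := setLIntegral_mono measurable_const hz
      _ = 0 := by simp
  -- piece 2
  have hφcont : ContinuousOn φ (Set.Icc l1 ε⁻¹) := by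
    apply ContinuousOn.mul continuousOn_const
    apply ContinuousOn.div
    · exact (Real.continuous_sqrt.comp
        (continuous_const.sub (continuous_const.mul (continuous_pow 2)))).continuousOn
    · exact continuousOn_id
    · intro x hx; exact ne_of_gt (lt_of_lt_of_le hl10 hx.1)
  have hφint : IntegrableOn φ (Set.Ioc l1 ε⁻¹) :=
    (hφcont.integrableOn_Icc).mono_set Set.Ioc_subset_Icc_self
  have hφnn : ∀ lam ∈ Set.Ioc l1 ε⁻¹, 0 ≤ φ lam := fun lam hlam =>
    mul_nonneg hΘ.le (div_nonneg (Real.sqrt_nonneg _) (lt_trans hl10 hlam.1).le)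
  have hφmble : Measurable fun lam => ENNReal.ofReal (φ lam) := by
    apply ENNReal.measurable_ofReal.comp
    apply Measurable.mul measurable_const
    exact (Real.continuous_sqrt.comp
      (continuous_const.sub (continuous_const.mul (continuous_pow 2)))).measurable.div measurable_id
  have hp2 : ∫⁻ lam in Set.Ioc l1 ε⁻¹, ν {t | lam < f t} ≤
      ENNReal.ofReal (∫ lam in Set.Ioc l1 ε⁻¹, φ lam) := by
    calc ∫⁻ lam in Set.Ioc l1 ε⁻¹, ν {t | lam < f t}
        ≤ ∫⁻ lam in Set.Ioc l1 ε⁻¹, ENNReal.ofReal (φ lam) :=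
          setLIntegral_mono hφmble hmeas_bound
      _ = ENNReal.ofReal (∫ lam in Set.Ioc l1 ε⁻¹, φ lam) :=
          (ofReal_integral_eq_lintegral_ofReal hφint
            ((ae_restrict_iff' measurableSet_Ioc).mpr (ae_of_all _ hφnn))).symm
  -- value of the middle integral
  have e1 : (1 : ℝ) - ε^2 * (ε⁻¹)^2 = 0 := by field_simp; norm_num
  have e2 : (1 : ℝ) - ε^2 * l1^2 = R^2/B^2 := by
    rw [hl1def]
    field_simp
    nlinarith [hB2]
  have e3 : Real.sqrt (R^2/B^2) = R/B := by
    rw [Real.sqrt_div (sq_nonneg R), Real.sqrt_sq hR, Real.sqrt_sq hB0.le]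
  have hJint : ∫ lam in Set.Ioc l1 ε⁻¹, φ lam =
      Θ * (Real.log ε⁻¹ - (R/B - Real.log (1 + R/B) + Real.log l1)) := by
    rw [← intervalIntegral.integral_of_le hl1ε, hφdef]
    rw [intervalIntegral.integral_const_mul]
    rw [aux_ftc ε l1 ε⁻¹ hε hl10 hl1ε le_rfl]
    rw [e1, e2, e3]
    norm_num
  have hJnn : 0 ≤ ∫ lam in Set.Ioc l1 ε⁻¹, φ lam :=
    setIntegral_nonneg measurableSet_Ioc hφnn
  -- final real arithmetic
  have hrhs_nn : 0 ≤ Θ * Real.log (1 + 2 * M / (ε * Θ)) := by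
    apply mul_nonneg hΘ.le
    apply Real.log_nonneg
    have : 0 ≤ 2 * M / (ε * Θ) := by positivity
    linarith
  have hval : M * l1 + ∫ lam in Set.Ioc l1 ε⁻¹, φ lam ≤
      Θ * Real.log (1 + 2 * M / (ε * Θ)) := by
    rw [hJint]
    have hMl1 : M * l1 = Θ * (R/B) := by
      rw [hMR, hl1def]; field_simp
    have harg : Real.log (1 + R/B) + Real.log B = Real.log (B + R) := by
      rw [← Real.log_mul (by positivity) (ne_of_gt hB0)]
      congr 1
      field_simp
    have h2M : 1 + 2 * M / (ε * Θ) = (ε + 2*R)/ε := by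
      rw [hMR]; field_simp
    have hlogle : Real.log (B + R) ≤ Real.log (ε + 2*R) := by
      apply Real.log_le_log (by positivity)
      linarith
    have hlog : Real.log (B + R) - Real.log ε ≤ Real.log (1 + 2 * M / (ε * Θ)) := by
      rw [h2M, Real.log_div (by positivity) (ne_of_gt hε)]
      linarith
    have hre : M * l1 + Θ * (Real.log ε⁻¹ - (R/B - Real.log (1 + R/B) + Real.log l1)) =
        Θ * (Real.log (B + R) - Real.log ε) := by
      rw [hMl1, hl1def, Real.log_inv, Real.log_inv, ← harg]
      ring
    rw [hre]
    exact mul_le_mul_of_nonneg_left hlog hΘ.le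
  -- put everything together
  rw [integral_eq_lintegral_of_nonneg_ae (ae_of_all _ hfnn) hfcont.aestronglyMeasurable]
  apply ENNReal.toReal_le_of_le_ofReal hrhs_nn
  rw [lintegral_eq_lintegral_meas_lt ν (ae_of_all _ hfnn) hfcont.measurable.aemeasurable]
  have hsplit : Set.Ioi (0:ℝ) = (Set.Ioc 0 l1 ∪ Set.Ioc l1 ε⁻¹) ∪ Set.Ioi ε⁻¹ := by
    rw [Set.Ioc_union_Ioc_eq_Ioc hl10.le hl1ε,
      Set.Ioc_union_Ioi_eq_Ioi (le_trans hl10.le hl1ε)]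
  calc ∫⁻ lam in Set.Ioi (0:ℝ), ν {t | lam < f t}
      ≤ (∫⁻ lam in Set.Ioc (0:ℝ) l1, ν {t | lam < f t}) +
        (∫⁻ lam in Set.Ioc l1 ε⁻¹, ν {t | lam < f t}) +
        (∫⁻ lam in Set.Ioi ε⁻¹, ν {t | lam < f t}) := by
        rw [hsplit]
        exact le_trans (lintegral_union_le _ _ _)
          (add_le_add_left (lintegral_union_le _ _ _) _)
    _ ≤ ENNReal.ofReal (M * l1) + ENNReal.ofReal (∫ lam in Set.Ioc l1 ε⁻¹, φ lam) + 0 :=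
        add_le_add (add_le_add hp1 hp2) (le_of_eq hp3)
    _ = ENNReal.ofReal (M * l1 + ∫ lam in Set.Ioc l1 ε⁻¹, φ lam) := by
        rw [add_zero, ← ENNReal.ofReal_add (by positivity) hJnn]
    _ ≤ ENNReal.ofReal (Θ * Real.log (1 + 2 * M / (ε * Θ))) :=
        ENNReal.ofReal_le_ofReal hval
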